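/- Let ω > 0, γ > 0 with γ < ω, set β = √(ω² − γ²), D_qq = γ/(2β), D_pq = −γ D_qq, D_pp = ω² D_qq, and c = (β + iγ)/2. Let L₁ be the operator (L₁ u)(x) = ((−2D_pq + iγ)/√(2D_pp)) · (−i u′(x)) + √(2D_pp) · x u(x). Then the Gaussian u(x) = exp(−c x²) satisfies (L₁ u)(x) = 0 for all x ∈ ℝ, i.e. u lies in the kernel of the Lindblad operator L₁. -/

import Mathlib

/-- in the limiting case `Δ = 0`, `D_pq = −γD_qq`, `D_pp = ω²D_qq`,
`D_qq = γ/(2β)` with `β = √(ω² − γ²)`, the Gaussian `u(x) = exp(−c x²)` with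
`c = (β + iγ)/2` lies in the kernel of `L₁`. -/
theorem gaussian_in_kernel_L1 (ω γ β Dqq Dpq Dpp : ℝ) (c : ℂ)
    (hω : 0 < ω) (hγ : 0 < γ) (hγω : γ < ω)
    (hβ : β = Real.sqrt (ω^2 - γ^2))
    (hDqq : Dqq = γ / (2*β)) (hDpq : Dpq = -γ*Dqq) (hDpp : Dpp = ω^2*Dqq)
    (hc : c = ((β : ℂ) + Complex.I * (γ : ℂ))/2) :
    ∀ x : ℝ,
      (((-2*Dpq : ℝ) : ℂ) + Complex.I * (γ : ℂ)) / ((Real.sqrt (2*Dpp) : ℝ) : ℂ)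
          * (-Complex.I * deriv (fun t : ℝ => Complex.exp (-c * (t : ℂ)^2)) x)
        + ((Real.sqrt (2*Dpp) : ℝ) : ℂ) * (x : ℂ) * Complex.exp (-c * (x : ℂ)^2) = 0 := by
  intro x
  have hβpos : 0 < β := by
    rw [hβ]
    apply Real.sqrt_pos.mpr
    nlinarith
  have hβsq : β^2 = ω^2 - γ^2 := by
    rw [hβ]; rw [Real.sq_sqrt]; nlinarith
  have hDppPos : 0 < Dpp := by
    rw [hDpp, hDqq]; positivity
  set s : ℝ := Real.sqrt (2*Dpp) with hs
  have hsne : (s:ℂ) ≠ 0 := by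
    simp only [ne_eq, Complex.ofReal_eq_zero]
    exact ne_of_gt (Real.sqrt_pos.mpr (by linarith))
  have hssq : (s:ℂ)^2 = 2*Dpp := by
    rw [← Complex.ofReal_pow, hs, Real.sq_sqrt (by linarith)]
    push_cast; ring
  -- compute the derivative
  have hderiv : deriv (fun t : ℝ => Complex.exp (-c * (t : ℂ)^2)) x
      = (-c * (2*x)) * Complex.exp (-c * (x:ℂ)^2) := by
    have h1 : HasDerivAt (fun z : ℂ => Complex.exp (-c * z^2))
        ((-c * (2 * (x:ℂ))) * Complex.exp (-c * (x:ℂ)^2)) (x:ℂ) := by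
      have h2 : HasDerivAt (fun z : ℂ => -c * z^2) (-c * (2 * (x:ℂ))) (x:ℂ) := by
        have := ((hasDerivAt_pow 2 (x:ℂ)).const_mul (-c))
        simpa using this
      simpa [mul_comm] using h2.cexp
    have h3 := h1.comp_ofReal
    rw [h3.deriv]
  rw [hderiv]
  set E := Complex.exp (-c * (x:ℂ)^2)
  have key : (((-2*Dpq : ℝ) : ℂ) + Complex.I * (γ : ℂ)) * (2 * Complex.I * c) = -(s:ℂ)^2 := by
    rw [hssq, hc, hDpq, hDqq]
    have hβne : (β:ℂ) ≠ 0 := by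
      simpa using ne_of_gt hβpos
    have : (Dpp:ℂ) = (ω:ℂ)^2 * (γ/(2*β)) := by
      rw [hDpp, hDqq]; push_cast; ring
    rw [this]
    have hωsq : (ω:ℂ)^2 = (β:ℂ)^2 + (γ:ℂ)^2 := by
      have : (β:ℂ)^2 = (ω:ℂ)^2 - (γ:ℂ)^2 := by
        exact_mod_cast congrArg (Complex.ofReal) hβsq
      linear_combination -this
    rw [hωsq]
    push_cast
    field_simp
    ring_nf
    linear_combination (8*(γ:ℂ)*(β:ℂ)^3+8*(γ:ℂ)^3*(β:ℂ)+8*(γ:ℂ)^2*Complex.I*(β:ℂ)^2 + ((γ:ℂ)*(β:ℂ)^2 - 8*(γ:ℂ)*(β:ℂ)^3 + (γ:ℂ)^2*Complex.I*(β:ℂ) - 8*(γ:ℂ)^2*Complex.I*(β:ℂ)^2 + (γ:ℂ)^3 - 8*(γ:ℂ)^3*(β:ℂ))) * Complex.I_sq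
  push_cast at key
  field_simp
  push_cast
  linear_combination ((x:ℂ)*E) * key
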